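/- Let U₁ → U₂ → X → (Y₁,Y₂,Y₃) be finitely-valued random variables with U₁ → U₂ → X Markov. If X → Y₁ → Y₃ is also Markov (Y₃ degraded from Y₁), then for any U₃ with U₁ → U₃ → X Markov and (U₁,U₂,U₃) → X → (Y₁,Y₃) Markov: I(U₃; Y₃) − I(U₃; Y₁ | U₁) ≤ I(U₁; Y₃). -/

import Mathlib

open Real BigOperators Finset

noncomputable section

/-- Probability that a random variable `X` takes value `a`, under weight function `μ`. -/
def prob {Ω : Type*} [Fintype Ω] {A : Type*} [DecidableEq A]
    (μ : Ω → ℝ) (X : Ω → A) (a : A) : ℝ :=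
  ∑ ω, if X ω = a then μ ω else 0

/-- Shannon entropy (natural log) of a finitely-valued random variable. -/
def Hent {Ω : Type*} [Fintype Ω] {A : Type*} [Fintype A] [DecidableEq A]
    (μ : Ω → ℝ) (X : Ω → A) : ℝ :=
  ∑ a, Real.negMulLog (prob μ X a)

/-- Mutual information `I(X;Y)`. -/
def MI {Ω : Type*} [Fintype Ω] {A B : Type*} [Fintype A] [DecidableEq A]
    [Fintype B] [DecidableEq B] (μ : Ω → ℝ) (X : Ω → A) (Y : Ω → B) : ℝ :=
  Hent μ X + Hent μ Y - Hent μ (fun ω => (X ω, Y ω))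

/-- Conditional mutual information `I(X;Y|Z)`. -/
def CMI {Ω : Type*} [Fintype Ω] {A B C : Type*} [Fintype A] [DecidableEq A]
    [Fintype B] [DecidableEq B] [Fintype C] [DecidableEq C]
    (μ : Ω → ℝ) (X : Ω → A) (Y : Ω → B) (Z : Ω → C) : ℝ :=
  Hent μ (fun ω => (X ω, Z ω)) + Hent μ (fun ω => (Y ω, Z ω))
    - Hent μ (fun ω => (X ω, Y ω, Z ω)) - Hent μ Z

/-- `μ` is a probability mass function on the finite sample space `Ω`. -/
def IsProbMeasure {Ω : Type*} [Fintype Ω] (μ : Ω → ℝ) : Prop :=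
  (∀ ω, 0 ≤ μ ω) ∧ ∑ ω, μ ω = 1

/-- `X → Y → Z` forms a Markov chain: `X` and `Z` are conditionally independent given `Y`. -/
def Markov {Ω : Type*} [Fintype Ω] {A B C : Type*} [DecidableEq A]
    [DecidableEq B] [DecidableEq C]
    (μ : Ω → ℝ) (X : Ω → A) (Y : Ω → B) (Z : Ω → C) : Prop :=
  ∀ a b c, prob μ (fun ω => (X ω, Y ω, Z ω)) (a, b, c) * prob μ Y b
    = prob μ (fun ω => (X ω, Y ω)) (a, b) * prob μ (fun ω => (Y ω, Z ω)) (b, c)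

end

set_option linter.unusedSectionVars false

noncomputable section AuxLemmas

variable {Ω : Type*} [Fintype Ω] {A B C D : Type*} [DecidableEq A] [DecidableEq B]
  [DecidableEq C] [DecidableEq D] {μ : Ω → ℝ}

lemma prob_nonneg (hμ : ∀ ω, 0 ≤ μ ω) (X : Ω → A) (a : A) : 0 ≤ prob μ X a := by
  refine Finset.sum_nonneg fun ω _ => ?_
  split
  · exact hμ ω
  · exact le_rfl

lemma prob_mono (hμ : ∀ ω, 0 ≤ μ ω) {X : Ω → A} {Y : Ω → B} {a : A} {b : B}
    (h : ∀ ω, X ω = a → Y ω = b) : prob μ X a ≤ prob μ Y b := by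
  refine Finset.sum_le_sum fun ω _ => ?_
  by_cases hx : X ω = a
  · simp [hx, h ω hx]
  · simp only [hx, if_false]
    split
    · exact hμ ω
    · exact le_rfl

lemma prob_comp (X : Ω → A) (f : A → B) [Fintype A] (b : B) :
    prob μ (fun ω => f (X ω)) b = ∑ a, if f a = b then prob μ X a else 0 := by
  have h1 : ∀ a : A, (if f a = b then prob μ X a else 0)
      = ∑ ω, if X ω = a ∧ f a = b then μ ω else 0 := by
    intro a
    by_cases h : f a = b
    · simp [prob, h]
    · simp [h]
  rw [Finset.sum_congr rfl (fun a _ => h1 a), Finset.sum_comm]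
  refine Finset.sum_congr rfl fun ω _ => ?_
  rw [Finset.sum_eq_single (X ω)]
  · simp
  · intro a _ h; simp [Ne.symm h]
  · simp

lemma prob_comp_inj {X : Ω → A} {f : A → B} (hf : Function.Injective f) (a : A) :
    prob μ (fun ω => f (X ω)) (f a) = prob μ X a := by
  refine Finset.sum_congr rfl fun ω _ => ?_
  simp [hf.eq_iff]

lemma sum_prob [Fintype A] (X : Ω → A) : ∑ a, prob μ X a = ∑ ω, μ ω := by
  unfold prob
  rw [Finset.sum_comm]
  exact Finset.sum_congr rfl fun ω _ => by simp

lemma prob_eq_zero_of_not_mem_range {X : Ω → A} {f : B → A} {a : A}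
    (ha : ∀ b, f b ≠ a) (hX : ∀ ω, X ω ∈ Set.range f) : prob μ X a = 0 := by
  refine Finset.sum_eq_zero fun ω _ => ?_
  obtain ⟨b, hb⟩ := hX ω
  simp [← hb, ha b]

lemma Hent_comp_inj [Fintype A] [Fintype B] {X : Ω → A} {f : A → B}
    (hf : Function.Injective f) :
    Hent μ (fun ω => f (X ω)) = Hent μ X := by
  unfold Hent
  calc ∑ b : B, Real.negMulLog (prob μ (fun ω => f (X ω)) b)
      = ∑ b ∈ Finset.univ.image f, Real.negMulLog (prob μ (fun ω => f (X ω)) b) := by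
        refine (Finset.sum_subset (Finset.subset_univ _) ?_).symm
        intro b _ hb
        simp only [Finset.mem_image, Finset.mem_univ, true_and] at hb
        push_neg at hb
        rw [prob_eq_zero_of_not_mem_range hb (fun ω => ⟨X ω, rfl⟩), Real.negMulLog_zero]
    _ = ∑ a : A, Real.negMulLog (prob μ (fun ω => f (X ω)) (f a)) :=
        Finset.sum_image (fun a _ a' _ h => hf h)
    _ = ∑ a : A, Real.negMulLog (prob μ X a) := by
        exact Finset.sum_congr rfl fun a _ => by rw [prob_comp_inj hf]

lemma margXZ (X : Ω → A) (Y : Ω → B) (Z : Ω → C) [Fintype B] (a : A) (c : C) :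
    prob μ (fun ω => (X ω, Z ω)) (a, c)
      = ∑ b, prob μ (fun ω => (X ω, Y ω, Z ω)) (a, b, c) := by
  unfold prob
  rw [Finset.sum_comm]
  refine Finset.sum_congr rfl fun ω _ => ?_
  rw [Finset.sum_eq_single (Y ω)]
  · simp [Prod.ext_iff, and_assoc, and_left_comm]
  · intro b _ h; simp [Prod.ext_iff]; tauto
  · simp

lemma margYZ (X : Ω → A) (Y : Ω → B) (Z : Ω → C) [Fintype A] (b : B) (c : C) :
    prob μ (fun ω => (Y ω, Z ω)) (b, c)
      = ∑ a, prob μ (fun ω => (X ω, Y ω, Z ω)) (a, b, c) := by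
  unfold prob
  rw [Finset.sum_comm]
  refine Finset.sum_congr rfl fun ω _ => ?_
  rw [Finset.sum_eq_single (X ω)]
  · simp [Prod.ext_iff]
  · intro a _ h; simp [Prod.ext_iff]; tauto
  · simp

lemma margA (Y : Ω → B) (Z : Ω → C) [Fintype B] (c : C) :
    prob μ Z c = ∑ b, prob μ (fun ω => (Y ω, Z ω)) (b, c) := by
  unfold prob
  rw [Finset.sum_comm]
  refine Finset.sum_congr rfl fun ω _ => ?_
  rw [Finset.sum_eq_single (Y ω)]
  · simp [Prod.ext_iff]
  · intro b _ h; simp [Prod.ext_iff]; tauto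
  · simp

lemma margZ3 (X : Ω → A) (Y : Ω → B) (Z : Ω → C) [Fintype A] [Fintype B] (c : C) :
    prob μ Z c = ∑ a, ∑ b, prob μ (fun ω => (X ω, Y ω, Z ω)) (a, b, c) := by
  rw [margA Y Z c, Finset.sum_comm]
  exact Finset.sum_congr rfl fun b _ => margYZ X Y Z b c

lemma margB (X : Ω → A) (Y : Ω → B) [Fintype B] (a : A) :
    prob μ X a = ∑ b, prob μ (fun ω => (X ω, Y ω)) (a, b) := by
  unfold prob
  rw [Finset.sum_comm]
  refine Finset.sum_congr rfl fun ω _ => ?_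
  rw [Finset.sum_eq_single (Y ω)]
  · simp [Prod.ext_iff]
  · intro b _ h; simp [Prod.ext_iff]; tauto
  · simp


section CMIexp
variable [Fintype A] [Fintype B] [Fintype C] (X : Ω → A) (Y : Ω → B) (Z : Ω → C)

lemma eHXZ :
    Hent μ (fun ω => (X ω, Z ω)) = ∑ a, ∑ b, ∑ c,
      (-(prob μ (fun ω => (X ω, Y ω, Z ω)) (a, b, c)
          * Real.log (prob μ (fun ω => (X ω, Z ω)) (a, c)))) := by
  rw [Hent, Fintype.sum_prod_type]
  refine Finset.sum_congr rfl fun a _ => ?_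
  rw [Finset.sum_comm]
  refine Finset.sum_congr rfl fun c _ => ?_
  rw [Real.negMulLog]
  nth_rewrite 1 [margXZ X Y Z a c]
  rw [neg_mul, Finset.sum_mul, ← Finset.sum_neg_distrib]

lemma eHYZ :
    Hent μ (fun ω => (Y ω, Z ω)) = ∑ a, ∑ b, ∑ c,
      (-(prob μ (fun ω => (X ω, Y ω, Z ω)) (a, b, c)
          * Real.log (prob μ (fun ω => (Y ω, Z ω)) (b, c)))) := by
  rw [Hent, Fintype.sum_prod_type]
  have step : ∀ b, ∀ c, Real.negMulLog (prob μ (fun ω => (Y ω, Z ω)) (b, c))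
      = ∑ a, (-(prob μ (fun ω => (X ω, Y ω, Z ω)) (a, b, c)
          * Real.log (prob μ (fun ω => (Y ω, Z ω)) (b, c)))) := by
    intro b c
    rw [Real.negMulLog]
    nth_rewrite 1 [margYZ X Y Z b c]
    rw [neg_mul, Finset.sum_mul, ← Finset.sum_neg_distrib]
  calc (∑ b, ∑ c, Real.negMulLog (prob μ (fun ω => (Y ω, Z ω)) (b, c)))
      = ∑ b, ∑ c, ∑ a, (-(prob μ (fun ω => (X ω, Y ω, Z ω)) (a, b, c)
          * Real.log (prob μ (fun ω => (Y ω, Z ω)) (b, c)))) := by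
        exact Finset.sum_congr rfl fun b _ => Finset.sum_congr rfl fun c _ => step b c
    _ = ∑ b, ∑ a, ∑ c, _ := Finset.sum_congr rfl fun b _ => Finset.sum_comm
    _ = _ := Finset.sum_comm

lemma eHZ :
    Hent μ Z = ∑ a, ∑ b, ∑ c,
      (-(prob μ (fun ω => (X ω, Y ω, Z ω)) (a, b, c) * Real.log (prob μ Z c))) := by
  rw [Hent]
  have step : ∀ c, Real.negMulLog (prob μ Z c)
      = ∑ a, ∑ b, (-(prob μ (fun ω => (X ω, Y ω, Z ω)) (a, b, c)
          * Real.log (prob μ Z c))) := by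
    intro c
    rw [Real.negMulLog]
    nth_rewrite 1 [margZ3 X Y Z c]
    rw [neg_mul, Finset.sum_mul, ← Finset.sum_neg_distrib]
    refine Finset.sum_congr rfl fun a _ => ?_
    rw [Finset.sum_mul, ← Finset.sum_neg_distrib]
  calc (∑ c, Real.negMulLog (prob μ Z c))
      = ∑ c, ∑ a, ∑ b, (-(prob μ (fun ω => (X ω, Y ω, Z ω)) (a, b, c)
          * Real.log (prob μ Z c))) := Finset.sum_congr rfl fun c _ => step c
    _ = ∑ a, ∑ c, ∑ b, _ := Finset.sum_comm
    _ = _ := Finset.sum_congr rfl fun a _ => Finset.sum_comm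

lemma eHXYZ :
    Hent μ (fun ω => (X ω, Y ω, Z ω)) = ∑ a, ∑ b, ∑ c,
      (-(prob μ (fun ω => (X ω, Y ω, Z ω)) (a, b, c)
          * Real.log (prob μ (fun ω => (X ω, Y ω, Z ω)) (a, b, c)))) := by
  rw [Hent, Fintype.sum_prod_type]
  refine Finset.sum_congr rfl fun a _ => ?_
  rw [Fintype.sum_prod_type]
  exact Finset.sum_congr rfl fun b _ => Finset.sum_congr rfl fun c _ => by
    rw [Real.negMulLog, neg_mul]


lemma CMI_eq_sum (hμ : ∀ ω, 0 ≤ μ ω) :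
    CMI μ X Y Z = ∑ a, ∑ b, ∑ c,
      (if prob μ (fun ω => (X ω, Y ω, Z ω)) (a, b, c) = 0 then 0 else
        prob μ (fun ω => (X ω, Y ω, Z ω)) (a, b, c) *
          Real.log (prob μ (fun ω => (X ω, Y ω, Z ω)) (a, b, c) * prob μ Z c /
            (prob μ (fun ω => (X ω, Z ω)) (a, c) * prob μ (fun ω => (Y ω, Z ω)) (b, c)))) := by
  rw [CMI, eHXZ X Y Z, eHYZ X Y Z, eHZ X Y Z, eHXYZ X Y Z]
  simp only [← Finset.sum_add_distrib, ← Finset.sum_sub_distrib]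
  refine Finset.sum_congr rfl fun a _ => Finset.sum_congr rfl fun b _ =>
    Finset.sum_congr rfl fun c _ => ?_
  by_cases hp : prob μ (fun ω => (X ω, Y ω, Z ω)) (a, b, c) = 0
  · simp [hp]
  · have hp' : 0 < prob μ (fun ω => (X ω, Y ω, Z ω)) (a, b, c) :=
      lt_of_le_of_ne (prob_nonneg hμ _ _) (Ne.symm hp)
    have h1 : 0 < prob μ (fun ω => (X ω, Z ω)) (a, c) :=
      lt_of_lt_of_le hp' (prob_mono hμ (fun ω h => by
        simp only [Prod.mk.injEq] at h ⊢; tauto))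
    have h2 : 0 < prob μ (fun ω => (Y ω, Z ω)) (b, c) :=
      lt_of_lt_of_le hp' (prob_mono hμ (fun ω h => by
        simp only [Prod.mk.injEq] at h ⊢; tauto))
    have h0 : 0 < prob μ Z c :=
      lt_of_lt_of_le hp' (prob_mono hμ (fun ω h => by
        simp only [Prod.mk.injEq] at h; tauto))
    rw [if_neg hp, Real.log_div (by positivity) (by positivity),
      Real.log_mul hp (ne_of_gt h0), Real.log_mul (ne_of_gt h1) (ne_of_gt h2)]
    ring

lemma sum_p3_eq_one (hμ : IsProbMeasure μ) :
    ∑ a, ∑ b, ∑ c, prob μ (fun ω => (X ω, Y ω, Z ω)) (a, b, c) = 1 := by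
  have := sum_prob (μ := μ) (X := fun ω => (X ω, Y ω, Z ω))
  rw [Fintype.sum_prod_type] at this
  simp only [Fintype.sum_prod_type] at this
  rw [this, hμ.2]

lemma CMI_nonneg (hμ : IsProbMeasure μ) : 0 ≤ CMI μ X Y Z := by
  obtain ⟨hpos, hsum⟩ := hμ
  rw [CMI_eq_sum X Y Z hpos]
  have hG : ∑ a, ∑ b, ∑ c,
      (if prob μ (fun ω => (X ω, Y ω, Z ω)) (a, b, c) = 0 then 0 else
        prob μ (fun ω => (X ω, Z ω)) (a, c) * prob μ (fun ω => (Y ω, Z ω)) (b, c)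
          / prob μ Z c) ≤ 1 := by
    have hG' : ∀ a b c, (if prob μ (fun ω => (X ω, Y ω, Z ω)) (a, b, c) = 0 then 0 else
        prob μ (fun ω => (X ω, Z ω)) (a, c) * prob μ (fun ω => (Y ω, Z ω)) (b, c)
          / prob μ Z c)
        ≤ (if prob μ Z c = 0 then 0 else
        prob μ (fun ω => (X ω, Z ω)) (a, c) * prob μ (fun ω => (Y ω, Z ω)) (b, c)
          / prob μ Z c) := by
      intro a b c
      by_cases hp : prob μ (fun ω => (X ω, Y ω, Z ω)) (a, b, c) = 0
      · rw [if_pos hp]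
        split
        · exact le_rfl
        · exact div_nonneg (mul_nonneg (prob_nonneg hpos _ _) (prob_nonneg hpos _ _))
            (prob_nonneg hpos _ _)
      · rw [if_neg hp]
        have hp' : 0 < prob μ (fun ω => (X ω, Y ω, Z ω)) (a, b, c) :=
          lt_of_le_of_ne (prob_nonneg hpos _ _) (Ne.symm hp)
        have h0 : 0 < prob μ Z c :=
          lt_of_lt_of_le hp' (prob_mono hpos (fun ω h => by
            simp only [Prod.mk.injEq] at h; tauto))
        rw [if_neg (ne_of_gt h0)]
    calc _ ≤ ∑ a, ∑ b, ∑ c, (if prob μ Z c = 0 then 0 else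
        prob μ (fun ω => (X ω, Z ω)) (a, c) * prob μ (fun ω => (Y ω, Z ω)) (b, c)
          / prob μ Z c) := by
          refine Finset.sum_le_sum fun a _ => Finset.sum_le_sum fun b _ =>
            Finset.sum_le_sum fun c _ => hG' a b c
      _ = ∑ c, ∑ a, ∑ b, (if prob μ Z c = 0 then 0 else
        prob μ (fun ω => (X ω, Z ω)) (a, c) * prob μ (fun ω => (Y ω, Z ω)) (b, c)
          / prob μ Z c) := by
          exact (Finset.sum_congr rfl fun a _ => Finset.sum_comm).trans Finset.sum_comm
      _ = ∑ c, prob μ Z c := by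
          refine Finset.sum_congr rfl fun c _ => ?_
          by_cases h0 : prob μ Z c = 0
          · simp [h0]
          · simp only [if_neg h0]
            have e1 : (∑ a, prob μ (fun ω => (X ω, Z ω)) (a, c)) = prob μ Z c :=
              (margA X Z c).symm
            have e2 : (∑ b, prob μ (fun ω => (Y ω, Z ω)) (b, c)) = prob μ Z c :=
              (margA Y Z c).symm
            calc (∑ a, ∑ b, prob μ (fun ω => (X ω, Z ω)) (a, c)
                    * prob μ (fun ω => (Y ω, Z ω)) (b, c) / prob μ Z c)
                = (∑ a, prob μ (fun ω => (X ω, Z ω)) (a, c))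
                    * (∑ b, prob μ (fun ω => (Y ω, Z ω)) (b, c)) / prob μ Z c := by
                  rw [Finset.sum_mul, Finset.sum_div]
                  refine Finset.sum_congr rfl fun a _ => ?_
                  rw [Finset.mul_sum, Finset.sum_div]
              _ = prob μ Z c := by rw [e1, e2]; field_simp
      _ = 1 := by rw [sum_prob, hsum]
  have hterm : ∀ a b c, prob μ (fun ω => (X ω, Y ω, Z ω)) (a, b, c)
      - (if prob μ (fun ω => (X ω, Y ω, Z ω)) (a, b, c) = 0 then 0 else
        prob μ (fun ω => (X ω, Z ω)) (a, c) * prob μ (fun ω => (Y ω, Z ω)) (b, c)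
          / prob μ Z c)
      ≤ (if prob μ (fun ω => (X ω, Y ω, Z ω)) (a, b, c) = 0 then 0 else
        prob μ (fun ω => (X ω, Y ω, Z ω)) (a, b, c) *
          Real.log (prob μ (fun ω => (X ω, Y ω, Z ω)) (a, b, c) * prob μ Z c /
            (prob μ (fun ω => (X ω, Z ω)) (a, c) * prob μ (fun ω => (Y ω, Z ω)) (b, c)))) := by
    intro a b c
    by_cases hp : prob μ (fun ω => (X ω, Y ω, Z ω)) (a, b, c) = 0
    · simp [hp]
    · have hp' : 0 < prob μ (fun ω => (X ω, Y ω, Z ω)) (a, b, c) :=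
        lt_of_le_of_ne (prob_nonneg hpos _ _) (Ne.symm hp)
      have h1 : 0 < prob μ (fun ω => (X ω, Z ω)) (a, c) :=
        lt_of_lt_of_le hp' (prob_mono hpos (fun ω h => by
          simp only [Prod.mk.injEq] at h ⊢; tauto))
      have h2 : 0 < prob μ (fun ω => (Y ω, Z ω)) (b, c) :=
        lt_of_lt_of_le hp' (prob_mono hpos (fun ω h => by
          simp only [Prod.mk.injEq] at h ⊢; tauto))
      have h0 : 0 < prob μ Z c :=
        lt_of_lt_of_le hp' (prob_mono hpos (fun ω h => by
          simp only [Prod.mk.injEq] at h; tauto))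
      rw [if_neg hp, if_neg hp]
      set p := prob μ (fun ω => (X ω, Y ω, Z ω)) (a, b, c)
      set m1 := prob μ (fun ω => (X ω, Z ω)) (a, c)
      set m2 := prob μ (fun ω => (Y ω, Z ω)) (b, c)
      set m0 := prob μ Z c
      have hx : 0 < p * m0 / (m1 * m2) := by positivity
      have hlog : 1 - (p * m0 / (m1 * m2))⁻¹ ≤ Real.log (p * m0 / (m1 * m2)) := by
        have := Real.log_le_sub_one_of_pos (inv_pos.mpr hx)
        rw [Real.log_inv] at this
        linarith
      calc p - m1 * m2 / m0 = p * (1 - (p * m0 / (m1 * m2))⁻¹) := by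
            field_simp
        _ ≤ p * Real.log (p * m0 / (m1 * m2)) :=
            mul_le_mul_of_nonneg_left hlog (le_of_lt hp')
  have hsum3 : ∑ a, ∑ b, ∑ c, (prob μ (fun ω => (X ω, Y ω, Z ω)) (a, b, c)
      - (if prob μ (fun ω => (X ω, Y ω, Z ω)) (a, b, c) = 0 then 0 else
        prob μ (fun ω => (X ω, Z ω)) (a, c) * prob μ (fun ω => (Y ω, Z ω)) (b, c)
          / prob μ Z c))
      ≤ ∑ a, ∑ b, ∑ c,
      (if prob μ (fun ω => (X ω, Y ω, Z ω)) (a, b, c) = 0 then 0 else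
        prob μ (fun ω => (X ω, Y ω, Z ω)) (a, b, c) *
          Real.log (prob μ (fun ω => (X ω, Y ω, Z ω)) (a, b, c) * prob μ Z c /
            (prob μ (fun ω => (X ω, Z ω)) (a, c) * prob μ (fun ω => (Y ω, Z ω)) (b, c)))) :=
    Finset.sum_le_sum fun a _ => Finset.sum_le_sum fun b _ =>
      Finset.sum_le_sum fun c _ => hterm a b c
  rw [show (∑ a, ∑ b, ∑ c, (prob μ (fun ω => (X ω, Y ω, Z ω)) (a, b, c)
      - (if prob μ (fun ω => (X ω, Y ω, Z ω)) (a, b, c) = 0 then 0 else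
        prob μ (fun ω => (X ω, Z ω)) (a, c) * prob μ (fun ω => (Y ω, Z ω)) (b, c)
          / prob μ Z c)))
      = (∑ a, ∑ b, ∑ c, prob μ (fun ω => (X ω, Y ω, Z ω)) (a, b, c))
      - ∑ a, ∑ b, ∑ c, (if prob μ (fun ω => (X ω, Y ω, Z ω)) (a, b, c) = 0 then 0 else
        prob μ (fun ω => (X ω, Z ω)) (a, c) * prob μ (fun ω => (Y ω, Z ω)) (b, c)
          / prob μ Z c) from by simp only [Finset.sum_sub_distrib]] at hsum3
  have h1 := sum_p3_eq_one X Y Z ⟨hpos, hsum⟩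
  linarith


lemma CMI_eq_zero_of_markov (hpos : ∀ ω, 0 ≤ μ ω) (hM : Markov μ X Z Y) :
    CMI μ X Y Z = 0 := by
  rw [CMI_eq_sum X Y Z hpos]
  refine Finset.sum_eq_zero fun a _ => Finset.sum_eq_zero fun b _ =>
    Finset.sum_eq_zero fun c _ => ?_
  by_cases hp : prob μ (fun ω => (X ω, Y ω, Z ω)) (a, b, c) = 0
  · rw [if_pos hp]
  · rw [if_neg hp]
    have hp' : 0 < prob μ (fun ω => (X ω, Y ω, Z ω)) (a, b, c) :=
      lt_of_le_of_ne (prob_nonneg hpos _ _) (Ne.symm hp)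
    have h0 : 0 < prob μ Z c :=
      lt_of_lt_of_le hp' (prob_mono hpos (fun ω h => by
        simp only [Prod.mk.injEq] at h; tauto))
    have e1 : prob μ (fun ω => (X ω, Z ω, Y ω)) (a, c, b)
        = prob μ (fun ω => (X ω, Y ω, Z ω)) (a, b, c) :=
      prob_comp_inj (X := fun ω => (X ω, Y ω, Z ω))
        (f := fun t : A × B × C => (t.1, t.2.2, t.2.1))
        (Function.LeftInverse.injective
          (g := fun t : A × C × B => (t.1, t.2.2, t.2.1)) (fun t => rfl)) (a, b, c)
    have e2 : prob μ (fun ω => (Z ω, Y ω)) (c, b)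
        = prob μ (fun ω => (Y ω, Z ω)) (b, c) :=
      prob_comp_inj (X := fun ω => (Y ω, Z ω))
        (f := fun t : B × C => (t.2, t.1))
        (Function.LeftInverse.injective
          (g := fun t : C × B => (t.2, t.1)) (fun t => rfl)) (b, c)
    have hMk := hM a c b
    rw [e1, e2] at hMk
    have : prob μ (fun ω => (X ω, Y ω, Z ω)) (a, b, c) * prob μ Z c /
        (prob μ (fun ω => (X ω, Z ω)) (a, c) * prob μ (fun ω => (Y ω, Z ω)) (b, c)) = 1 := by
      rw [← hMk]
      field_simp
    rw [this, Real.log_one, mul_zero]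

end CMIexp


section Marg4
variable (W : Ω → A) (X : Ω → B) (Y : Ω → C) (Z : Ω → D)

lemma margXY [Fintype C] (a : A) (b : B) :
    prob μ (fun ω => (W ω, X ω)) (a, b)
      = ∑ c, prob μ (fun ω => (W ω, X ω, Y ω)) (a, b, c) := by
  unfold prob
  rw [Finset.sum_comm]
  refine Finset.sum_congr rfl fun ω _ => ?_
  rw [Finset.sum_eq_single (Y ω)]
  · simp [Prod.ext_iff]
  · intro c _ h; simp [Prod.ext_iff]; tauto
  · simp

lemma m_dropX [Fintype B] (w : A) (y : C) (z : D) :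
    prob μ (fun ω => (W ω, Y ω, Z ω)) (w, y, z)
      = ∑ x, prob μ (fun ω => (W ω, X ω, Y ω, Z ω)) (w, x, y, z) := by
  unfold prob
  rw [Finset.sum_comm]
  refine Finset.sum_congr rfl fun ω _ => ?_
  rw [Finset.sum_eq_single (X ω)]
  · simp [Prod.ext_iff]
  · intro x _ h; simp [Prod.ext_iff]; tauto
  · simp

lemma m_dropZ [Fintype D] (w : A) (x : B) (y : C) :
    prob μ (fun ω => (W ω, X ω, Y ω)) (w, x, y)
      = ∑ z, prob μ (fun ω => (W ω, X ω, Y ω, Z ω)) (w, x, y, z) := by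
  unfold prob
  rw [Finset.sum_comm]
  refine Finset.sum_congr rfl fun ω _ => ?_
  rw [Finset.sum_eq_single (Z ω)]
  · simp [Prod.ext_iff]
  · intro z _ h; simp [Prod.ext_iff]; tauto
  · simp

lemma m_dropXZ [Fintype B] [Fintype D] (w : A) (y : C) :
    prob μ (fun ω => (W ω, Y ω)) (w, y)
      = ∑ x, ∑ z, prob μ (fun ω => (W ω, X ω, Y ω, Z ω)) (w, x, y, z) := by
  rw [margXY W Y Z w y]
  rw [Finset.sum_comm]
  exact Finset.sum_congr rfl fun z _ => m_dropX W X Y Z w y z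

lemma mgU2a (V1 : Ω → A) (V2 : Ω → B) (V3 : Ω → C) (S : Ω → D) [Fintype B]
    (v1 : A) (v3 : C) (s : D) :
    prob μ (fun ω => ((V1 ω, V3 ω), S ω)) ((v1, v3), s)
      = ∑ v2, prob μ (fun ω => ((V1 ω, V2 ω, V3 ω), S ω)) ((v1, v2, v3), s) := by
  unfold prob
  rw [Finset.sum_comm]
  refine Finset.sum_congr rfl fun ω _ => ?_
  rw [Finset.sum_eq_single (V2 ω)]
  · simp [Prod.ext_iff]
  · intro v _ h; simp [Prod.ext_iff]; tauto
  · simp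

end Marg4


section MarkovLemmas
variable [Fintype A] [Fintype B] [Fintype C] [Fintype D]

/-- If `W → X → (Y,Z)` and `X → Y → Z` are Markov, then `W → Y → Z` is Markov. -/
lemma markov_degraded (hpos : ∀ ω, 0 ≤ μ ω) (W : Ω → A) (X : Ω → B) (Y : Ω → C) (Z : Ω → D)
    (h1 : Markov μ W X (fun ω => (Y ω, Z ω))) (h2 : Markov μ X Y Z) :
    Markov μ W Y Z := by
  intro w y z
  -- marginal of h1 over z : p(W,X,Y) pX = p(W,X) p(X,Y)
  have h1m : ∀ x, prob μ (fun ω => (W ω, X ω, Y ω)) (w, x, y) * prob μ X x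
      = prob μ (fun ω => (W ω, X ω)) (w, x) * prob μ (fun ω => (X ω, Y ω)) (x, y) := by
    intro x
    rw [m_dropZ W X Y Z w x y, margXY X Y Z x y, Finset.sum_mul, Finset.mul_sum]
    exact Finset.sum_congr rfl fun z' _ => h1 w x (y, z')
  -- termwise : p4(w,x,y,z) * pY = p(W,X,Y)(w,x,y) * p(Y,Z)(y,z)
  have key : ∀ x, prob μ (fun ω => (W ω, X ω, Y ω, Z ω)) (w, x, y, z) * prob μ Y y
      = prob μ (fun ω => (W ω, X ω, Y ω)) (w, x, y)
          * prob μ (fun ω => (Y ω, Z ω)) (y, z) := by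
    intro x
    by_cases hx : prob μ X x = 0
    · have e1 : prob μ (fun ω => (W ω, X ω, Y ω, Z ω)) (w, x, y, z) = 0 :=
        le_antisymm (hx ▸ prob_mono hpos (fun ω h => by
          simp only [Prod.mk.injEq] at h; tauto)) (prob_nonneg hpos _ _)
      have e2 : prob μ (fun ω => (W ω, X ω, Y ω)) (w, x, y) = 0 :=
        le_antisymm (hx ▸ prob_mono hpos (fun ω h => by
          simp only [Prod.mk.injEq] at h; tauto)) (prob_nonneg hpos _ _)
      rw [e1, e2, zero_mul, zero_mul]
    · apply mul_right_cancel₀ hx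
      have e3 : prob μ (fun ω => (W ω, X ω, Y ω, Z ω)) (w, x, y, z)
          = prob μ (fun ω => (W ω, X ω, (Y ω, Z ω))) (w, x, (y, z)) := rfl
      have e4 : prob μ (fun ω => (X ω, (Y ω, Z ω))) (x, (y, z))
          = prob μ (fun ω => (X ω, Y ω, Z ω)) (x, y, z) := rfl
      calc prob μ (fun ω => (W ω, X ω, Y ω, Z ω)) (w, x, y, z) * prob μ Y y * prob μ X x
          = prob μ (fun ω => (W ω, X ω, (Y ω, Z ω))) (w, x, (y, z)) * prob μ X x
              * prob μ Y y := by rw [e3]; ring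
        _ = prob μ (fun ω => (W ω, X ω)) (w, x)
              * (prob μ (fun ω => (X ω, Y ω, Z ω)) (x, y, z) * prob μ Y y) := by
            rw [h1 w x (y, z), e4]; ring
        _ = prob μ (fun ω => (W ω, X ω)) (w, x)
              * (prob μ (fun ω => (X ω, Y ω)) (x, y)
                  * prob μ (fun ω => (Y ω, Z ω)) (y, z)) := by rw [h2 x y z]
        _ = (prob μ (fun ω => (W ω, X ω)) (w, x) * prob μ (fun ω => (X ω, Y ω)) (x, y))
              * prob μ (fun ω => (Y ω, Z ω)) (y, z) := by ring
        _ = prob μ (fun ω => (W ω, X ω, Y ω)) (w, x, y) * prob μ X x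
              * prob μ (fun ω => (Y ω, Z ω)) (y, z) := by rw [h1m x]
        _ = prob μ (fun ω => (W ω, X ω, Y ω)) (w, x, y)
              * prob μ (fun ω => (Y ω, Z ω)) (y, z) * prob μ X x := by ring
  rw [m_dropX W X Y Z w y z, Finset.sum_mul,
    show prob μ (fun ω => (W ω, Y ω)) (w, y)
      = ∑ x, prob μ (fun ω => (W ω, X ω, Y ω)) (w, x, y) from margXZ W X Y w y,
    Finset.sum_mul]
  exact Finset.sum_congr rfl fun x _ => key x

/-- If `(A,B) → Y → Z` is Markov then `B → (A,Y) → Z` is Markov. -/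
lemma markov_pair_cond (hpos : ∀ ω, 0 ≤ μ ω)
    (Av : Ω → A) (Bv : Ω → B) (Y : Ω → C) (Z : Ω → D)
    (h : Markov μ (fun ω => (Av ω, Bv ω)) Y Z) :
    Markov μ Bv (fun ω => (Av ω, Y ω)) Z := by
  rintro b ⟨a, y⟩ z
  have e1 : prob μ (fun ω => (Bv ω, (Av ω, Y ω), Z ω)) (b, (a, y), z)
      = prob μ (fun ω => (Av ω, Bv ω, Y ω, Z ω)) (a, b, y, z) :=
    prob_comp_inj (X := fun ω => (Av ω, Bv ω, Y ω, Z ω))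
      (f := fun t : A × B × C × D => (t.2.1, (t.1, t.2.2.1), t.2.2.2))
      (Function.LeftInverse.injective
        (g := fun t : B × (A × C) × D => (t.2.1.1, t.1, t.2.1.2, t.2.2)) (fun t => rfl))
      (a, b, y, z)
  have e2 : prob μ (fun ω => (Bv ω, (Av ω, Y ω))) (b, (a, y))
      = ∑ z', prob μ (fun ω => (Av ω, Bv ω, Y ω, Z ω)) (a, b, y, z') := by
    rw [show prob μ (fun ω => (Bv ω, (Av ω, Y ω))) (b, (a, y))
        = prob μ (fun ω => (Av ω, Bv ω, Y ω)) (a, b, y) from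
      prob_comp_inj (X := fun ω => (Av ω, Bv ω, Y ω))
        (f := fun t : A × B × C => (t.2.1, (t.1, t.2.2)))
        (Function.LeftInverse.injective
          (g := fun t : B × A × C => (t.2.1, t.1, t.2.2)) (fun t => rfl)) (a, b, y)]
    exact m_dropZ Av Bv Y Z a b y
  have e3 : prob μ (fun ω => ((Av ω, Y ω), Z ω)) ((a, y), z)
      = prob μ (fun ω => (Av ω, Y ω, Z ω)) (a, y, z) :=
    prob_comp_inj (X := fun ω => (Av ω, Y ω, Z ω))
      (f := fun t : A × C × D => ((t.1, t.2.1), t.2.2))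
      (Function.LeftInverse.injective
        (g := fun t : (A × C) × D => (t.1.1, t.1.2, t.2)) (fun t => rfl)) (a, y, z)
  have hABj : ∀ b' z', prob μ (fun ω => ((Av ω, Bv ω), Y ω, Z ω)) ((a, b'), y, z')
      = prob μ (fun ω => (Av ω, Bv ω, Y ω, Z ω)) (a, b', y, z') := fun b' z' =>
    prob_comp_inj (X := fun ω => (Av ω, Bv ω, Y ω, Z ω))
      (f := fun t : A × B × C × D => ((t.1, t.2.1), t.2.2.1, t.2.2.2))
      (Function.LeftInverse.injective
        (g := fun t : (A × B) × C × D => (t.1.1, t.1.2, t.2.1, t.2.2)) (fun t => rfl))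
      (a, b', y, z')
  have hABm : ∀ b', prob μ (fun ω => ((Av ω, Bv ω), Y ω)) ((a, b'), y)
      = ∑ z', prob μ (fun ω => (Av ω, Bv ω, Y ω, Z ω)) (a, b', y, z') := by
    intro b'
    rw [show prob μ (fun ω => ((Av ω, Bv ω), Y ω)) ((a, b'), y)
        = prob μ (fun ω => (Av ω, Bv ω, Y ω)) (a, b', y) from
      prob_comp_inj (X := fun ω => (Av ω, Bv ω, Y ω))
        (f := fun t : A × B × C => ((t.1, t.2.1), t.2.2))
        (Function.LeftInverse.injective
          (g := fun t : (A × B) × C => (t.1.1, t.1.2, t.2)) (fun t => rfl)) (a, b', y)]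
    exact m_dropZ Av Bv Y Z a b' y
  -- marginal of h over b : p(A,Y,Z) pY = p(A,Y) p(Y,Z)
  have hm : prob μ (fun ω => (Av ω, Y ω, Z ω)) (a, y, z) * prob μ Y y
      = prob μ (fun ω => (Av ω, Y ω)) (a, y) * prob μ (fun ω => (Y ω, Z ω)) (y, z) := by
    rw [m_dropX Av Bv Y Z a y z, m_dropXZ Av Bv Y Z a y, Finset.sum_mul, Finset.sum_mul]
    refine Finset.sum_congr rfl fun b' _ => ?_
    have := h (a, b') y z
    rw [hABj b' z, hABm b'] at this
    rw [this, Finset.sum_mul]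
  by_cases hY : prob μ Y y = 0
  · have eAY : prob μ (fun ω => (Av ω, Y ω)) (a, y) = 0 :=
      le_antisymm (hY ▸ prob_mono hpos (fun ω h' => by
        simp only [Prod.mk.injEq] at h'; tauto)) (prob_nonneg hpos _ _)
    have eB : prob μ (fun ω => (Bv ω, (Av ω, Y ω))) (b, (a, y)) = 0 :=
      le_antisymm (eAY ▸ prob_mono hpos (fun ω h' => by
        simp only [Prod.mk.injEq] at h' ⊢; tauto)) (prob_nonneg hpos _ _)
    rw [eAY, eB, mul_zero, zero_mul]
  · apply mul_right_cancel₀ hY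
    have hj := h (a, b) y z
    rw [hABj b z, hABm b] at hj
    calc prob μ (fun ω => (Bv ω, (Av ω, Y ω), Z ω)) (b, (a, y), z)
          * prob μ (fun ω => (Av ω, Y ω)) (a, y) * prob μ Y y
        = (prob μ (fun ω => (Av ω, Bv ω, Y ω, Z ω)) (a, b, y, z) * prob μ Y y)
            * prob μ (fun ω => (Av ω, Y ω)) (a, y) := by rw [e1]; ring
      _ = ((∑ z', prob μ (fun ω => (Av ω, Bv ω, Y ω, Z ω)) (a, b, y, z'))
            * prob μ (fun ω => (Y ω, Z ω)) (y, z))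
            * prob μ (fun ω => (Av ω, Y ω)) (a, y) := by rw [hj]
      _ = (∑ z', prob μ (fun ω => (Av ω, Bv ω, Y ω, Z ω)) (a, b, y, z'))
            * (prob μ (fun ω => (Av ω, Y ω)) (a, y)
                * prob μ (fun ω => (Y ω, Z ω)) (y, z)) := by ring
      _ = (∑ z', prob μ (fun ω => (Av ω, Bv ω, Y ω, Z ω)) (a, b, y, z'))
            * (prob μ (fun ω => (Av ω, Y ω, Z ω)) (a, y, z) * prob μ Y y) := by rw [hm]
      _ = prob μ (fun ω => (Bv ω, (Av ω, Y ω))) (b, (a, y))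
            * prob μ (fun ω => ((Av ω, Y ω), Z ω)) ((a, y), z) * prob μ Y y := by
          rw [e2, e3]; ring

end MarkovLemmas


lemma Hent_perm {A B : Type*} [Fintype A] [Fintype B] [DecidableEq A] [DecidableEq B]
    (X : Ω → A) (f : A → B) (g : B → A) (hgf : ∀ a, g (f a) = a) :
    Hent μ (fun ω => f (X ω)) = Hent μ X :=
  Hent_comp_inj (Function.LeftInverse.injective hgf)


end AuxLemmas

/-- Converse inequality for the degraded receiver: if `U₁ → U₂ → X`,
`U₁ → U₃ → X`, `(U₁,U₂,U₃) → X → (Y₁,Y₃)` and `X → Y₁ → Y₃` are Markov, then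
`I(U₃;Y₃) − I(U₃;Y₁|U₁) ≤ I(U₁;Y₃)`. -/
theorem degraded_converse_bound {Ω : Type*} [Fintype Ω]
    {𝒰₁ 𝒰₂ 𝒰₃ 𝒳 𝒴₁ 𝒴₃ : Type*}
    [Fintype 𝒰₁] [DecidableEq 𝒰₁] [Fintype 𝒰₂] [DecidableEq 𝒰₂]
    [Fintype 𝒰₃] [DecidableEq 𝒰₃] [Fintype 𝒳] [DecidableEq 𝒳]
    [Fintype 𝒴₁] [DecidableEq 𝒴₁] [Fintype 𝒴₃] [DecidableEq 𝒴₃]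
    (μ : Ω → ℝ) (hμ : IsProbMeasure μ)
    (U₁ : Ω → 𝒰₁) (U₂ : Ω → 𝒰₂) (U₃ : Ω → 𝒰₃) (X : Ω → 𝒳)
    (Y₁ : Ω → 𝒴₁) (Y₃ : Ω → 𝒴₃)
    (h₁₂ : Markov μ U₁ U₂ X)
    (h₁₃ : Markov μ U₁ U₃ X)
    (hCh : Markov μ (fun ω => (U₁ ω, U₂ ω, U₃ ω)) X (fun ω => (Y₁ ω, Y₃ ω)))
    (hDeg : Markov μ X Y₁ Y₃) :
    MI μ U₃ Y₃ - CMI μ U₃ Y₁ U₁ ≤ MI μ U₁ Y₃ := by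
  obtain ⟨hpos, hsum⟩ := hμ
  -- marginalize U₂ out of hCh
  have hCh' : Markov μ (fun ω => (U₁ ω, U₃ ω)) X (fun ω => (Y₁ ω, Y₃ ω)) := by
    rintro ⟨u1, u3⟩ x y
    have m1 : prob μ (fun ω => ((U₁ ω, U₃ ω), X ω, (Y₁ ω, Y₃ ω))) ((u1, u3), x, y)
        = ∑ u2, prob μ (fun ω => ((U₁ ω, U₂ ω, U₃ ω), X ω, (Y₁ ω, Y₃ ω)))
            ((u1, u2, u3), x, y) :=
      mgU2a U₁ U₂ U₃ (fun ω => (X ω, (Y₁ ω, Y₃ ω))) u1 u3 (x, y)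
    have m2 : prob μ (fun ω => ((U₁ ω, U₃ ω), X ω)) ((u1, u3), x)
        = ∑ u2, prob μ (fun ω => ((U₁ ω, U₂ ω, U₃ ω), X ω)) ((u1, u2, u3), x) :=
      mgU2a U₁ U₂ U₃ X u1 u3 x
    rw [m1, m2, Finset.sum_mul, Finset.sum_mul]
    exact Finset.sum_congr rfl fun u2 _ => hCh (u1, u2, u3) x y
  have hM : Markov μ (fun ω => (U₁ ω, U₃ ω)) Y₁ Y₃ :=
    markov_degraded hpos _ X Y₁ Y₃ hCh' hDeg
  have hM2 : Markov μ U₃ (fun ω => (U₁ ω, Y₁ ω)) Y₃ :=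
    markov_pair_cond hpos U₁ U₃ Y₁ Y₃ hM
  have hz : CMI μ U₃ Y₃ (fun ω => (U₁ ω, Y₁ ω)) = 0 :=
    CMI_eq_zero_of_markov U₃ Y₃ (fun ω => (U₁ ω, Y₁ ω)) hpos hM2
  have n1 : 0 ≤ CMI μ U₁ Y₃ U₃ := CMI_nonneg U₁ Y₃ U₃ ⟨hpos, hsum⟩
  have n2 : 0 ≤ CMI μ U₃ Y₁ (fun ω => (U₁ ω, Y₃ ω)) :=
    CMI_nonneg U₃ Y₁ (fun ω => (U₁ ω, Y₃ ω)) ⟨hpos, hsum⟩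
  -- chain rule identity 1
  have id1 : MI μ U₁ Y₃ + CMI μ U₃ Y₃ U₁ = MI μ U₃ Y₃ + CMI μ U₁ Y₃ U₃ := by
    have s1 : Hent μ (fun ω => (U₃ ω, U₁ ω)) = Hent μ (fun ω => (U₁ ω, U₃ ω)) :=
      Hent_perm (fun ω => (U₁ ω, U₃ ω)) (fun t => (t.2, t.1)) (fun t => (t.2, t.1))
        (fun t => rfl)
    have s2 : Hent μ (fun ω => (Y₃ ω, U₁ ω)) = Hent μ (fun ω => (U₁ ω, Y₃ ω)) :=
      Hent_perm (fun ω => (U₁ ω, Y₃ ω)) (fun t => (t.2, t.1)) (fun t => (t.2, t.1))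
        (fun t => rfl)
    have s3 : Hent μ (fun ω => (Y₃ ω, U₃ ω)) = Hent μ (fun ω => (U₃ ω, Y₃ ω)) :=
      Hent_perm (fun ω => (U₃ ω, Y₃ ω)) (fun t => (t.2, t.1)) (fun t => (t.2, t.1))
        (fun t => rfl)
    have s4 : Hent μ (fun ω => (U₃ ω, Y₃ ω, U₁ ω)) = Hent μ (fun ω => (U₁ ω, Y₃ ω, U₃ ω)) := by
      have a1 : Hent μ (fun ω => (U₃ ω, Y₃ ω, U₁ ω))
          = Hent μ (fun ω => (U₁ ω, U₃ ω, Y₃ ω)) :=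
        Hent_perm (fun ω => (U₁ ω, U₃ ω, Y₃ ω))
          (fun t => (t.2.1, t.2.2, t.1)) (fun t => (t.2.2, t.1, t.2.1)) (fun t => rfl)
      have a2 : Hent μ (fun ω => (U₁ ω, Y₃ ω, U₃ ω))
          = Hent μ (fun ω => (U₁ ω, U₃ ω, Y₃ ω)) :=
        Hent_perm (fun ω => (U₁ ω, U₃ ω, Y₃ ω))
          (fun t => (t.1, t.2.2, t.2.1)) (fun t => (t.1, t.2.2, t.2.1)) (fun t => rfl)
      rw [a1, a2]
    unfold MI CMI
    linarith
  -- chain rule identity 2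
  have id2 : CMI μ U₃ Y₁ U₁ + CMI μ U₃ Y₃ (fun ω => (U₁ ω, Y₁ ω))
      = CMI μ U₃ Y₃ U₁ + CMI μ U₃ Y₁ (fun ω => (U₁ ω, Y₃ ω)) := by
    have t1 : Hent μ (fun ω => (Y₁ ω, U₁ ω)) = Hent μ (fun ω => (U₁ ω, Y₁ ω)) :=
      Hent_perm (fun ω => (U₁ ω, Y₁ ω)) (fun t => (t.2, t.1)) (fun t => (t.2, t.1))
        (fun t => rfl)
    have t1' : Hent μ (fun ω => (Y₃ ω, U₁ ω)) = Hent μ (fun ω => (U₁ ω, Y₃ ω)) :=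
      Hent_perm (fun ω => (U₁ ω, Y₃ ω)) (fun t => (t.2, t.1)) (fun t => (t.2, t.1))
        (fun t => rfl)
    have t2 : Hent μ (fun ω => (U₃ ω, Y₁ ω, U₁ ω))
        = Hent μ (fun ω => (U₃ ω, (U₁ ω, Y₁ ω))) := by
      have a1 : Hent μ (fun ω => (U₃ ω, Y₁ ω, U₁ ω))
          = Hent μ (fun ω => (U₃ ω, U₁ ω, Y₁ ω)) :=
        Hent_perm (fun ω => (U₃ ω, U₁ ω, Y₁ ω))
          (fun t => (t.1, t.2.2, t.2.1)) (fun t => (t.1, t.2.2, t.2.1)) (fun t => rfl)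
      exact a1
    have t5 : Hent μ (fun ω => (U₃ ω, Y₃ ω, U₁ ω))
        = Hent μ (fun ω => (U₃ ω, (U₁ ω, Y₃ ω))) := by
      have a1 : Hent μ (fun ω => (U₃ ω, Y₃ ω, U₁ ω))
          = Hent μ (fun ω => (U₃ ω, U₁ ω, Y₃ ω)) :=
        Hent_perm (fun ω => (U₃ ω, U₁ ω, Y₃ ω))
          (fun t => (t.1, t.2.2, t.2.1)) (fun t => (t.1, t.2.2, t.2.1)) (fun t => rfl)
      exact a1
    have t3 : Hent μ (fun ω => (Y₃ ω, (U₁ ω, Y₁ ω)))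
        = Hent μ (fun ω => (Y₁ ω, (U₁ ω, Y₃ ω))) := by
      have a1 : Hent μ (fun ω => (Y₃ ω, (U₁ ω, Y₁ ω)))
          = Hent μ (fun ω => (U₁ ω, Y₁ ω, Y₃ ω)) :=
        Hent_perm (fun ω => (U₁ ω, Y₁ ω, Y₃ ω))
          (fun t => (t.2.2, t.1, t.2.1)) (fun t => (t.2.1, t.2.2, t.1)) (fun t => rfl)
      have a2 : Hent μ (fun ω => (Y₁ ω, (U₁ ω, Y₃ ω)))
          = Hent μ (fun ω => (U₁ ω, Y₁ ω, Y₃ ω)) :=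
        Hent_perm (fun ω => (U₁ ω, Y₁ ω, Y₃ ω))
          (fun t => (t.2.1, t.1, t.2.2)) (fun t => (t.2.1, t.1, t.2.2)) (fun t => rfl)
      rw [a1, a2]
    have t4 : Hent μ (fun ω => (U₃ ω, Y₃ ω, (U₁ ω, Y₁ ω)))
        = Hent μ (fun ω => (U₃ ω, Y₁ ω, (U₁ ω, Y₃ ω))) := by
      have a1 : Hent μ (fun ω => (U₃ ω, Y₃ ω, (U₁ ω, Y₁ ω)))
          = Hent μ (fun ω => (U₁ ω, U₃ ω, Y₁ ω, Y₃ ω)) :=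
        Hent_perm (fun ω => (U₁ ω, U₃ ω, Y₁ ω, Y₃ ω))
          (fun t => (t.2.1, t.2.2.2, (t.1, t.2.2.1)))
          (fun t => (t.2.2.1, t.1, t.2.2.2, t.2.1)) (fun t => rfl)
      have a2 : Hent μ (fun ω => (U₃ ω, Y₁ ω, (U₁ ω, Y₃ ω)))
          = Hent μ (fun ω => (U₁ ω, U₃ ω, Y₁ ω, Y₃ ω)) :=
        Hent_perm (fun ω => (U₁ ω, U₃ ω, Y₁ ω, Y₃ ω))
          (fun t => (t.2.1, t.2.2.1, (t.1, t.2.2.2)))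
          (fun t => (t.2.2.1, t.1, t.2.1, t.2.2.2)) (fun t => rfl)
      rw [a1, a2]
    unfold CMI
    linarith
  linarith
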